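/- The Hamiltonian H(p,q) = (1/2) Σ_{i,j} pᵢ pⱼ e^{−|qᵢ−qⱼ|} is constant along solutions of the multi-peakon ODE system: q̇ᵢ = Σⱼ pⱼ e^{−|qᵢ−qⱼ|}, ṗᵢ = Σ_{j≠i} pᵢ pⱼ sign(qᵢ−qⱼ) e^{−|qᵢ−qⱼ|}, as long as the positions qᵢ(t) remain pairwise distinct. -/

import Mathlib

private lemma sign_coe_eq (x : ℝ) (hx : x ≠ 0) : (SignType.sign x : ℝ) = Real.sign x := by
  rcases hx.lt_or_gt with h | h
  · rw [Real.sign_of_neg h]; simp [h]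
  · rw [Real.sign_of_pos h]; simp [h]

private lemma aux_sum_zero {N : ℕ} (P dq : Fin N → ℝ) (S E : Fin N → Fin N → ℝ)
    (hS : ∀ i j, S j i = - S i j) (hE : ∀ i j, E j i = E i j)
    (hdq : ∀ i, dq i = ∑ j, P j * E i j) :
    ∑ i, ∑ j, ((∑ k, P i * P k * S i k * E i k) * P j * E i j
      + P i * (∑ k, P j * P k * S j k * E j k) * E i j
      + P i * P j * (-(S i j * (dq i - dq j)) * E i j)) = 0 := by
  set dp : Fin N → ℝ := fun i => ∑ k, P i * P k * S i k * E i k with hdp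
  have h1 : ∑ i, ∑ j, dp i * P j * E i j = ∑ i, dp i * dq i := by
    refine Finset.sum_congr rfl fun i _ => ?_
    rw [hdq, Finset.mul_sum]
    exact Finset.sum_congr rfl fun j _ => by ring
  have h2 : ∑ i, ∑ j, P i * dp j * E i j = ∑ i, dp i * dq i := by
    rw [Finset.sum_comm]
    refine Finset.sum_congr rfl fun j _ => ?_
    rw [hdq, Finset.mul_sum]
    refine Finset.sum_congr rfl fun i _ => ?_
    rw [← hE i j]; ring
  have h4 : ∑ i, ∑ j, P i * P j * (S i j * E i j) * dq i = ∑ i, dp i * dq i := by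
    refine Finset.sum_congr rfl fun i _ => ?_
    rw [hdp, Finset.sum_mul]
    exact Finset.sum_congr rfl fun j _ => by ring
  have h3 : ∑ i, ∑ j, P i * P j * (S i j * E i j) * dq j
      = - ∑ i, ∑ j, P i * P j * (S i j * E i j) * dq i := by
    rw [Finset.sum_comm, ← Finset.sum_neg_distrib]
    refine Finset.sum_congr rfl fun j _ => ?_
    rw [← Finset.sum_neg_distrib]
    refine Finset.sum_congr rfl fun i _ => ?_
    rw [hS i j, hE i j]; ring
  have expand : ∀ i j : Fin N,
      dp i * P j * E i j + P i * dp j * E i j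
        + P i * P j * (-(S i j * (dq i - dq j)) * E i j)
      = dp i * P j * E i j + P i * dp j * E i j
        + (-(P i * P j * (S i j * E i j) * dq i) + P i * P j * (S i j * E i j) * dq j) := by
    intro i j; ring
  calc ∑ i, ∑ j, (dp i * P j * E i j + P i * dp j * E i j
        + P i * P j * (-(S i j * (dq i - dq j)) * E i j))
      = ∑ i, ∑ j, (dp i * P j * E i j + P i * dp j * E i j
        + (-(P i * P j * (S i j * E i j) * dq i) + P i * P j * (S i j * E i j) * dq j)) := by
        exact Finset.sum_congr rfl fun i _ => Finset.sum_congr rfl fun j _ => expand i j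
    _ = (∑ i, ∑ j, dp i * P j * E i j) + (∑ i, ∑ j, P i * dp j * E i j)
        + ((- ∑ i, ∑ j, P i * P j * (S i j * E i j) * dq i)
          + ∑ i, ∑ j, P i * P j * (S i j * E i j) * dq j) := by
        simp [Finset.sum_add_distrib, Finset.sum_neg_distrib]
    _ = 0 := by rw [h1, h2, h3, h4]; ring

theorem multipeakon_hamiltonian_conserved (N : ℕ)
    (p q : ℝ → Fin N → ℝ) (a b : ℝ)
    (hq : ∀ i, ∀ t ∈ Set.Icc a b, HasDerivAt (fun s => q s i)
      (∑ j, p t j * Real.exp (-|q t i - q t j|)) t)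
    (hp : ∀ i, ∀ t ∈ Set.Icc a b, HasDerivAt (fun s => p s i)
      (∑ j ∈ Finset.univ.filter (· ≠ i),
        p t i * p t j * Real.sign (q t i - q t j) *
          Real.exp (-|q t i - q t j|)) t)
    (hdistinct : ∀ t ∈ Set.Icc a b, ∀ i j, i ≠ j → q t i ≠ q t j) :
    ∀ t ∈ Set.Icc a b,
      (1 / 2) * ∑ i, ∑ j, p t i * p t j * Real.exp (-|q t i - q t j|) =
      (1 / 2) * ∑ i, ∑ j, p a i * p a j * Real.exp (-|q a i - q a j|) := by
  have key : ∀ t ∈ Set.Icc a b,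
      HasDerivAt (fun s => ∑ i, ∑ j, p s i * p s j * Real.exp (-|q s i - q s j|)) 0 t := by
    intro t ht
    -- notation
    set P : Fin N → ℝ := fun i => p t i with hPdef
    set S : Fin N → Fin N → ℝ := fun i j => Real.sign (q t i - q t j) with hSdef
    set E : Fin N → Fin N → ℝ := fun i j => Real.exp (-|q t i - q t j|) with hEdef
    set dq : Fin N → ℝ := fun i => ∑ j, P j * E i j with hdqdef
    set dp : Fin N → ℝ := fun i => ∑ k, P i * P k * S i k * E i k with hdpdef
    have hS : ∀ i j, S j i = - S i j := fun i j => by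
      simp only [hSdef]; rw [← Real.sign_neg]; ring_nf
    have hE : ∀ i j, E j i = E i j := fun i j => by
      simp only [hEdef, abs_sub_comm]
    have hpfull : ∀ i, HasDerivAt (fun s => p s i) (dp i) t := by
      intro i
      have hfil : (∑ j ∈ Finset.univ.filter (· ≠ i),
          P i * P j * S i j * E i j) = dp i := by
        refine Finset.sum_subset (Finset.filter_subset _ _) fun j _ hj => ?_
        have hji : j = i := by simpa using hj
        subst hji
        simp [hSdef, sub_self, Real.sign_zero]
      rw [← hfil]
      exact hp i t ht
    have hqfull : ∀ i, HasDerivAt (fun s => q s i) (dq i) t := fun i => hq i t ht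
    have hterm : ∀ i j, HasDerivAt (fun s => p s i * p s j * Real.exp (-|q s i - q s j|))
        (dp i * P j * E i j + P i * dp j * E i j
          + P i * P j * (-(S i j * (dq i - dq j)) * E i j)) t := by
      intro i j
      by_cases hij : i = j
      · subst hij
        have : HasDerivAt (fun s => p s i * p s i) (dp i * P i + P i * dp i) t :=
          (hpfull i).mul (hpfull i)
        have heq : (fun s => p s i * p s i * Real.exp (-|q s i - q s i|))
            = fun s => p s i * p s i := by
          funext s; simp
        rw [heq]
        convert this using 1
        simp [hEdef, hSdef, Real.sign_zero]
      · have hne : q t i - q t j ≠ 0 := sub_ne_zero.2 (hdistinct t ht i j hij)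
        have hsub : HasDerivAt (fun s => q s i - q s j) (dq i - dq j) t :=
          (hqfull i).sub (hqfull j)
        have habs : HasDerivAt (fun s => |q s i - q s j|)
            ((SignType.sign (q t i - q t j) : ℝ) * (dq i - dq j)) t :=
          by have h := (hasDerivAt_abs hne).comp t hsub; exact h
        have habs' : HasDerivAt (fun s => |q s i - q s j|) (S i j * (dq i - dq j)) t := by
          rwa [sign_coe_eq _ hne] at habs
        have hexp : HasDerivAt (fun s => Real.exp (-|q s i - q s j|))
            (Real.exp (-|q t i - q t j|) * (-(S i j * (dq i - dq j)))) t :=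
          habs'.neg.exp
        have := ((hpfull i).fun_mul (hpfull j)).fun_mul hexp
        refine this.congr_deriv ?_
        show _ = dp i * p t j * Real.exp (-|q t i - q t j|) + p t i * dp j * Real.exp (-|q t i - q t j|)
          + p t i * p t j * (-(S i j * (dq i - dq j)) * Real.exp (-|q t i - q t j|))
        ring
    have hD : HasDerivAt (fun s => ∑ i, ∑ j, p s i * p s j * Real.exp (-|q s i - q s j|))
        (∑ i, ∑ j, (dp i * P j * E i j + P i * dp j * E i j
          + P i * P j * (-(S i j * (dq i - dq j)) * E i j))) t :=
      HasDerivAt.fun_sum fun i _ => HasDerivAt.fun_sum fun j _ => hterm i j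
    have hzero : (∑ i, ∑ j, (dp i * P j * E i j + P i * dp j * E i j
        + P i * P j * (-(S i j * (dq i - dq j)) * E i j))) = 0 := by
      simpa [hdpdef] using aux_sum_zero P dq S E hS hE (fun i => rfl)
    rwa [hzero] at hD
  have hconst : ∀ x ∈ Set.Icc a b,
      (∑ i, ∑ j, p x i * p x j * Real.exp (-|q x i - q x j|)) =
      ∑ i, ∑ j, p a i * p a j * Real.exp (-|q a i - q a j|) := by
    refine constant_of_has_deriv_right_zero
      (f := fun s => ∑ i, ∑ j, p s i * p s j * Real.exp (-|q s i - q s j|))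
      (fun s hs => (key s hs).continuousAt.continuousWithinAt)
      (fun s hs => ((key s (Set.mem_Icc_of_Ico hs)).hasDerivWithinAt))
  intro t ht
  rw [hconst t ht]
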